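/- Let m ≥ 1 and let c : ℕ^m → ℂ satisfy ∑_{j ∈ ℕ^m} |c(j)|² < ∞. Suppose c = ∑_{ℓ=1}^L a_1^{(ℓ)} ⊗ ⋯ ⊗ a_m^{(ℓ)} for some L < ∞ and some sequences a_i^{(ℓ)} : ℕ → ℂ. Then there exist L' < ∞ and sequences c_i^{(ℓ)} ∈ ℓ²(ℕ), 1 ≤ i ≤ m, 1 ≤ ℓ ≤ L', such that c = ∑_{ℓ=1}^{L'} c_1^{(ℓ)} ⊗ ⋯ ⊗ c_m^{(ℓ)}. -/

import Mathlib

open scoped BigOperators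

open Finset in
/-- Linearly independent families of functions admit evaluation points with
invertible evaluation matrix. -/
lemma exists_points_det_ne_zero {α : Type*} :
    ∀ (n : ℕ) (f : Fin n → α → ℂ), LinearIndependent ℂ f →
    ∃ p : Fin n → α, (Matrix.of fun r k => f k (p r)).det ≠ 0 := by
  intro n
  induction n with
  | zero =>
    intro f _
    exact ⟨Fin.elim0, by simp [Matrix.det_fin_zero]⟩
  | succ n ih =>
    intro f hf
    obtain ⟨p, hp⟩ := ih (fun r => f r.castSucc)
      (hf.comp Fin.castSucc (Fin.castSucc_injective n))
    set N : α → Matrix (Fin (n+1)) (Fin (n+1)) ℂ :=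
      fun x => Matrix.of fun r k => f k (Fin.lastCases x p r) with hN
    set C : Fin (n+1) → ℂ := fun k =>
      (-1 : ℂ) ^ ((n : ℕ) + (k : ℕ)) *
        (Matrix.of fun (r : Fin n) (k' : Fin n) => f (k.succAbove k') (p r)).det with hC
    have hexp : ∀ x, (N x).det = ∑ k : Fin (n+1), C k * f k x := by
      intro x
      rw [Matrix.det_succ_row (N x) (Fin.last n)]
      refine Finset.sum_congr rfl fun k _ => ?_
      have h1 : (N x) (Fin.last n) k = f k x := by simp [hN]
      have h2 : ((N x).submatrix (Fin.last n).succAbove k.succAbove)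
          = Matrix.of fun (r : Fin n) (k' : Fin n) => f (k.succAbove k') (p r) := by
        ext r k'
        simp [hN, Matrix.submatrix_apply, Fin.succAbove_last]
      rw [h1, h2, hC]
      simp [Fin.val_last]
      ring
    have hClast : C (Fin.last n) ≠ 0 := by
      have : (Fin.last n).succAbove = Fin.castSucc := Fin.succAbove_last
      simp only [hC, this]
      intro h
      rcases mul_eq_zero.mp h with h | h
      · exact (pow_ne_zero _ (neg_ne_zero.mpr one_ne_zero)) h
      · exact hp h
    have hx : ∃ x, (N x).det ≠ 0 := by
      by_contra hcon
      push_neg at hcon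
      have hz : (∑ k : Fin (n+1), C k • f k) = 0 := by
        funext x
        have := hcon x
        rw [hexp x] at this
        simpa [Finset.sum_apply] using this
      exact hClast (Fintype.linearIndependent_iff.mp hf C
        (by simpa using hz) (Fin.last n))
    obtain ⟨x, hx⟩ := hx
    exact ⟨Fin.lastCases x p, hx⟩

/-- ℓ² is closed under finite sums. -/
lemma l2_finset_sum {ι : Type*} (s : Finset ι) (f : ι → ℕ+ → ℂ)
    (h : ∀ r ∈ s, Summable fun n => ‖f r n‖ ^ 2) :
    Summable fun n => ‖∑ r ∈ s, f r n‖ ^ 2 := by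
  classical
  induction s using Finset.induction_on with
  | empty => simpa using summable_zero
  | insert _ _ hx ih =>
    rename_i x s'
    have h1 : Summable fun n => ‖f x n‖ ^ 2 :=
      h x (Finset.mem_insert_self _ _)
    have h2 := ih fun r hr => h r (Finset.mem_insert_of_mem hr)
    have hb := (h1.add h2).mul_left 2
    have key : Summable fun n => ‖f x n + ∑ r ∈ s', f r n‖ ^ 2 := by
      refine Summable.of_nonneg_of_le (fun n => by positivity) (fun n => ?_) hb
      have htri := norm_add_le (f x n) (∑ r ∈ s', f r n)
      have h0 : (0:ℝ) ≤ ‖f x n‖ := norm_nonneg _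
      have h0' : (0:ℝ) ≤ ‖∑ r ∈ s', f r n‖ := norm_nonneg _
      have h0'' : (0:ℝ) ≤ ‖f x n + ∑ r ∈ s', f r n‖ := norm_nonneg _
      nlinarith [sq_nonneg (‖f x n‖ - ‖∑ r ∈ s', f r n‖)]
    exact key.congr fun n => by rw [Finset.sum_insert hx]

lemma l2_lincomb {ι : Type*} [Fintype ι] (lam : ι → ℂ) (f : ι → ℕ+ → ℂ)
    (h : ∀ r, Summable fun n => ‖f r n‖ ^ 2) :
    Summable fun n => ‖∑ r, lam r * f r n‖ ^ 2 := by
  refine l2_finset_sum Finset.univ (fun r n => lam r * f r n) fun r _ => ?_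
  have := (h r).mul_left (‖lam r‖ ^ 2)
  refine this.congr fun n => ?_
  rw [norm_mul, mul_pow]

lemma slice_summable {m : ℕ} (c : (Fin m → ℕ+) → ℂ)
    (hc2 : Summable fun j : Fin m → ℕ+ => ‖c j‖ ^ 2)
    (i0 : Fin m) (j : Fin m → ℕ+) :
    Summable fun n : ℕ+ => ‖c (Function.update j i0 n)‖ ^ 2 := by
  have hinj : Function.Injective (fun n : ℕ+ => Function.update j i0 n) := by
    intro x y h
    have := congrFun h i0
    simpa [Function.update_self] using this
  exact hc2.comp_injective hinj
lemma step_lemma {m L : ℕ} (c : (Fin m → ℕ+) → ℂ)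
    (hc2 : Summable fun j : Fin m → ℕ+ => ‖c j‖ ^ 2)
    (i0 : Fin m) (a : Fin L → Fin m → ℕ+ → ℂ)
    (hrep : ∀ j : Fin m → ℕ+, c j = ∑ ℓ, ∏ i, a ℓ i (j i)) :
    ∃ (L' : ℕ) (b : Fin L' → Fin m → ℕ+ → ℂ) (e : Fin L' → Fin L),
      (∀ ℓ, Summable fun n : ℕ+ => ‖b ℓ i0 n‖ ^ 2) ∧
      (∀ ℓ i, i ≠ i0 → b ℓ i = a (e ℓ) i) ∧
      (∀ j : Fin m → ℕ+, c j = ∑ ℓ, ∏ i, b ℓ i (j i)) := by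
  classical
  set T : Fin L → (Fin m → ℕ+) → ℂ :=
    fun ℓ j => ∏ i ∈ Finset.univ.erase i0, a ℓ i (j i) with hT
  have hTupd : ∀ ℓ j n, T ℓ (Function.update j i0 n) = T ℓ j := by
    intro ℓ j n
    refine Finset.prod_congr rfl fun i hi => ?_
    rw [Function.update_of_ne (Finset.ne_of_mem_erase hi)]
  have hsplit : ∀ ℓ (j : Fin m → ℕ+),
      (∏ i, a ℓ i (j i)) = a ℓ i0 (j i0) * T ℓ j :=
    fun ℓ j => (Finset.mul_prod_erase _ _ (Finset.mem_univ i0)).symm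
  obtain ⟨bset, hbsub, hbspan, hbli⟩ := exists_linearIndependent ℂ (Set.range T)
  have hbfin : bset.Finite := (Set.finite_range T).subset hbsub
  haveI : Fintype bset := hbfin.fintype
  have hmem : ∀ w : bset, ∃ ℓ, T ℓ = (w : (Fin m → ℕ+) → ℂ) := fun w => hbsub w.2
  choose e0 he0 using hmem
  have hspan : ∀ ℓ, T ℓ ∈ Submodule.span ℂ
      (Set.range ((↑) : bset → (Fin m → ℕ+) → ℂ)) := by
    intro ℓ
    rw [Subtype.range_coe, hbspan]
    exact Submodule.subset_span ⟨ℓ, rfl⟩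
  have hμ : ∀ ℓ, ∃ μ : bset → ℂ,
      ∑ w, μ w • (w : (Fin m → ℕ+) → ℂ) = T ℓ :=
    fun ℓ => Submodule.mem_span_range_iff_exists_fun ℂ |>.mp (hspan ℓ)
  choose μ hμ using hμ
  set g : bset → ℕ+ → ℂ := fun w n => ∑ ℓ, μ ℓ w * a ℓ i0 n with hg
  have hkey : ∀ j : Fin m → ℕ+,
      c j = ∑ w : bset, g w (j i0) * (w : (Fin m → ℕ+) → ℂ) j := by
    intro j
    rw [hrep]
    have h1 : ∀ ℓ, (∏ i, a ℓ i (j i))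
        = ∑ w : bset, a ℓ i0 (j i0) * (μ ℓ w * (w : (Fin m → ℕ+) → ℂ) j) := by
      intro ℓ
      rw [hsplit, ← hμ ℓ, Finset.sum_apply, Finset.mul_sum]
      simp
    rw [Finset.sum_congr rfl fun ℓ _ => h1 ℓ, Finset.sum_comm]
    refine Finset.sum_congr rfl fun w _ => ?_
    rw [hg, Finset.sum_mul]
    exact Finset.sum_congr rfl fun ℓ _ => by ring
  obtain ⟨p, hdet⟩ := exists_points_det_ne_zero (Fintype.card bset)
    (fun k => ((Fintype.equivFin bset).symm k : (Fin m → ℕ+) → ℂ))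
    (hbli.comp _ (Fintype.equivFin bset).symm.injective)
  set ε := (Fintype.equivFin bset).symm with hε
  set M : Matrix (Fin (Fintype.card bset)) (Fin (Fintype.card bset)) ℂ :=
    Matrix.of fun r k => (ε k : (Fin m → ℕ+) → ℂ) (p r) with hM
  have hwupd : ∀ (w : bset) (j : Fin m → ℕ+) n,
      (w : (Fin m → ℕ+) → ℂ) (Function.update j i0 n)
        = (w : (Fin m → ℕ+) → ℂ) j := by
    intro w j n
    rw [← he0 w]
    exact hTupd _ _ _
  have hsys : ∀ n : ℕ+, M.mulVec (fun k => g (ε k) n)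
      = fun r => c (Function.update (p r) i0 n) := by
    intro n
    funext r
    have := hkey (Function.update (p r) i0 n)
    rw [Function.update_self] at this
    rw [Matrix.mulVec, this]
    rw [← Equiv.sum_comp ε
      (fun w => g w n * (w : (Fin m → ℕ+) → ℂ) (Function.update (p r) i0 n))]
    refine Finset.sum_congr rfl fun k _ => ?_
    rw [hwupd (ε k) (p r) n]
    simp [dotProduct, hM, mul_comm]
  have hMunit : IsUnit M.det := isUnit_iff_ne_zero.mpr hdet
  have hginv : ∀ (k : Fin (Fintype.card bset)) (n : ℕ+),
      g (ε k) n = ∑ r, M⁻¹ k r * c (Function.update (p r) i0 n) := by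
    intro k n
    have h1 : M⁻¹.mulVec (M.mulVec (fun k => g (ε k) n)) = fun k => g (ε k) n := by
      rw [Matrix.mulVec_mulVec, Matrix.nonsing_inv_mul M hMunit, Matrix.one_mulVec]
    have h2 := congrFun h1 k
    rw [hsys n] at h2
    rw [← h2]
    simp [Matrix.mulVec, dotProduct]
  have hgsum : ∀ k : Fin (Fintype.card bset),
      Summable fun n : ℕ+ => ‖g (ε k) n‖ ^ 2 := by
    intro k
    have hsl : ∀ r : Fin (Fintype.card bset),
        Summable fun n : ℕ+ =>
          ‖c (Function.update (p r) i0 n)‖ ^ 2 :=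
      fun r => slice_summable c hc2 i0 (p r)
    have := l2_lincomb (fun r => M⁻¹ k r)
      (fun r n => c (Function.update (p r) i0 n)) hsl
    exact this.congr fun n => by rw [← hginv]
  refine ⟨Fintype.card bset,
    fun k i => if i = i0 then g (ε k) else a (e0 (ε k)) i,
    fun k => e0 (ε k), ?_, ?_, ?_⟩
  · intro k
    simpa using hgsum k
  · intro k i hi
    simp [hi]
  · intro j
    rw [hkey, ← Equiv.sum_comp ε
      (fun w => g w (j i0) * (w : (Fin m → ℕ+) → ℂ) j)]
    refine Finset.sum_congr rfl fun k _ => ?_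
    beta_reduce
    rw [← Finset.mul_prod_erase Finset.univ
      (fun i => (if i = i0 then g (ε k) else a (e0 (ε k)) i) (j i))
      (Finset.mem_univ i0)]
    rw [if_pos rfl]
    congr 1
    rw [← he0 (ε k)]
    exact (Finset.prod_congr rfl fun i hi => by
      rw [if_neg (Finset.ne_of_mem_erase hi)]).symm
theorem stmt12 (m : ℕ) (hm : 1 ≤ m) (c : (Fin m → ℕ+) → ℂ)
    (hc2 : Summable fun j : Fin m → ℕ+ => ‖c j‖ ^ 2)
    (L : ℕ) (a : Fin L → Fin m → ℕ+ → ℂ)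
    (hrep : ∀ j : Fin m → ℕ+, c j = ∑ ℓ, ∏ i, a ℓ i (j i)) :
    ∃ (L' : ℕ) (b : Fin L' → Fin m → ℕ+ → ℂ),
      (∀ ℓ i, Summable fun n : ℕ+ => ‖b ℓ i n‖ ^ 2) ∧
      ∀ j : Fin m → ℕ+, c j = ∑ ℓ, ∏ i, b ℓ i (j i) := by
  classical
  suffices h : ∀ s : Finset (Fin m), ∃ (L' : ℕ) (b : Fin L' → Fin m → ℕ+ → ℂ),
      (∀ ℓ, ∀ i ∈ s, Summable fun n : ℕ+ => ‖b ℓ i n‖ ^ 2) ∧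
      ∀ j : Fin m → ℕ+, c j = ∑ ℓ, ∏ i, b ℓ i (j i) by
    obtain ⟨L', b, h1, h2⟩ := h Finset.univ
    exact ⟨L', b, fun ℓ i => h1 ℓ i (Finset.mem_univ i), h2⟩
  intro s
  induction s using Finset.induction_on with
  | empty => exact ⟨L, a, fun ℓ i hi => absurd hi (by simp), hrep⟩
  | insert _ _ hi0 ih =>
    rename_i i0 s'
    obtain ⟨L₁, b₁, h1, h2⟩ := ih
    obtain ⟨L₂, b₂, e, hsum, hkeep, hrep₂⟩ := step_lemma c hc2 i0 b₁ h2
    refine ⟨L₂, b₂, ?_, hrep₂⟩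
    intro ℓ i hi
    rcases Finset.mem_insert.mp hi with h | h
    · subst h
      exact hsum ℓ
    · have hne : i ≠ i0 := fun h' => hi0 (h' ▸ h)
      rw [hkeep ℓ i hne]
      exact h1 (e ℓ) i h
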